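/- arXiv:1210.8302 — 6 statements merged into one kernel-verified Lean document; each statement's English description precedes it below -/
import Mathlib

section
/- A continuous function f : [0,1] → [0,1] is min-convex (i.e., f(λx + (1−λ)y) ≥ min(f(x), f(y)) for all x, y, λ ∈ [0,1]) if and only if for all 0 ≤ x < z < y ≤ 1, f(z) < f(x) implies f(y) ≤ f(z). -/
/-- A continuous fuzzy set `f : [0,1] → [0,1]` is min-convex iff for all
`0 ≤ x < z < y ≤ 1`, `f z < f x` implies `f y ≤ f z`. -/
theorem stmt0 (f : ℝ → ℝ)
    (hmap : Set.MapsTo f (Set.Icc 0 1) (Set.Icc 0 1))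
    (hcont : ContinuousOn f (Set.Icc 0 1)) :
    (∀ x ∈ Set.Icc (0:ℝ) 1, ∀ y ∈ Set.Icc (0:ℝ) 1, ∀ l ∈ Set.Icc (0:ℝ) 1,
        min (f x) (f y) ≤ f (l * x + (1 - l) * y)) ↔
      (∀ x z y : ℝ, 0 ≤ x → x < z → z < y → y ≤ 1 → f z < f x → f y ≤ f z) := by
  constructor
  · intro h x z y hx hxz hzy hy hfz
    set l : ℝ := (y - z) / (y - x) with hl
    have hxy : x < y := hxz.trans hzy
    have hyx : (0:ℝ) < y - x := by linarith
    have hl0 : 0 ≤ l := div_nonneg (by linarith) (by linarith)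
    have hl1 : l ≤ 1 := by
      rw [div_le_one hyx]; linarith
    have hz : l * x + (1 - l) * y = z := by
      field_simp [hl]
      have hlm : l * (y - x) = y - z := by rw [hl]; exact div_mul_cancel₀ _ hyx.ne'
      linear_combination -hlm
    have := h x ⟨hx, by linarith⟩ y ⟨by linarith, hy⟩ l ⟨hl0, hl1⟩
    rw [hz] at this
    rcases min_le_iff.mp this with h'|h'
    · linarith
    · exact h'
  · intro h x hx y hy l hl
    by_contra hc
    push_neg at hc
    set z : ℝ := l * x + (1 - l) * y with hz
    have hfx : f z < f x := lt_of_lt_of_le hc (min_le_left _ _)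
    have hfy : f z < f y := lt_of_lt_of_le hc (min_le_right _ _)
    rcases lt_trichotomy x y with hxy | hxy | hxy
    · have hzmem : x ≤ z ∧ z ≤ y := by
        constructor <;> nlinarith [hl.1, hl.2, hx.1, hx.2, hy.1, hy.2]
      rcases eq_or_lt_of_le hzmem.1 with he | h1
      · rw [← he] at hfx; linarith
      rcases eq_or_lt_of_le hzmem.2 with he | h2
      · rw [he] at hfy; linarith
      exact absurd (h x z y hx.1 h1 h2 hy.2 hfx) (not_le.mpr hfy)
    · have : z = x := by rw [hz, hxy]; ring
      rw [this] at hfx; linarith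
    · have hzmem : y ≤ z ∧ z ≤ x := by
        constructor <;> nlinarith [hl.1, hl.2, hx.1, hx.2, hy.1, hy.2]
      rcases eq_or_lt_of_le hzmem.1 with he | h1
      · rw [← he] at hfy; linarith
      rcases eq_or_lt_of_le hzmem.2 with he | h2
      · rw [he] at hfx; linarith
      exact absurd (h y z x hy.1 h1 h2 hx.2 hfy) (not_le.mpr hfx)
end

section
/- A function f : [0,1] → [0,1] is strictly min-convex (i.e., f(λx + (1−λ)y) > min(f(x), f(y)) for all x, y, λ ∈ [0,1] with x ≠ y and 0 < λ < 1) if and only if for all 0 ≤ x < z < y ≤ 1, f(z) ≤ f(x) implies f(y) < f(z). -/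
/-- A fuzzy set `f : [0,1] → [0,1]` is strictly min-convex iff for all
`0 ≤ x < z < y ≤ 1`, `f z ≤ f x` implies `f y < f z`. -/
theorem stmt1 (f : ℝ → ℝ)
    (hmap : Set.MapsTo f (Set.Icc 0 1) (Set.Icc 0 1)) :
    (∀ x ∈ Set.Icc (0:ℝ) 1, ∀ y ∈ Set.Icc (0:ℝ) 1, x ≠ y →
        ∀ l : ℝ, 0 < l → l < 1 → min (f x) (f y) < f (l * x + (1 - l) * y)) ↔
      (∀ x z y : ℝ, 0 ≤ x → x < z → z < y → y ≤ 1 → f z ≤ f x → f y < f z) := by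
  constructor
  · intro h x z y hx hxz hzy hy hfzx
    have hl : (0:ℝ) < (y - z) / (y - x) := by
      apply div_pos <;> linarith
    have hl1 : (y - z) / (y - x) < 1 := by
      rw [div_lt_one (by linarith)]; linarith
    have hne : y - x ≠ 0 := ne_of_gt (by linarith)
    have hz : (y - z) / (y - x) * x + (1 - (y - z) / (y - x)) * y = z := by
      field_simp
      ring
    have := h x ⟨hx, by linarith⟩ y ⟨by linarith, hy⟩ (by linarith) _ hl hl1
    rw [hz] at this
    rcases min_cases (f x) (f y) with ⟨he, _⟩ | ⟨he, hle⟩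
    · rw [he] at this; linarith
    · rw [he] at this; linarith
  · intro h x hx y hy hxy l hl hl1
    set z := l * x + (1 - l) * y with hz
    by_contra hc
    push_neg at hc
    have hfx : f z ≤ f x := le_trans hc (min_le_left _ _)
    have hfy : f z ≤ f y := le_trans hc (min_le_right _ _)
    rcases lt_or_gt_of_ne hxy with hlt | hgt
    · have h1 : x < z := by nlinarith
      have h2 : z < y := by nlinarith
      exact absurd (h x z y hx.1 h1 h2 hy.2 hfx) (not_lt.mpr hfy)
    · have h1 : y < z := by nlinarith
      have h2 : z < x := by nlinarith
      exact absurd (h y z x hy.1 h1 h2 hx.2 hfy) (not_lt.mpr hfx)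
end

section
/- If P = {f_1, …, f_n} is a pseudo-triangular basis of fuzzy sets, then the map T_P : [0,1] → [0,1]^n given by t ↦ (f_1(t), …, f_n(t)) is injective. -/
/-- If `P = {f_1,…,f_n}` is a pseudo-triangular basis of fuzzy sets
(conditions (a)–(d), up to a permutation `σ` of the indices), then
`T_P : [0,1] → [0,1]^n` is injective. -/
theorem stmt2 (n : ℕ) (hn : 2 ≤ n) (f : Fin n → ℝ → ℝ)
    (σ : Equiv.Perm (Fin n)) (t : Fin n → ℝ)
    (hcont : ∀ i, ContinuousOn (f i) (Set.Icc 0 1))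
    (hmap : ∀ i, Set.MapsTo (f i) (Set.Icc 0 1) (Set.Icc 0 1))
    (hmono : StrictMono t)
    (ht0 : t ⟨0, by omega⟩ = 0)
    (ht1 : t ⟨n - 1, by omega⟩ = 1)
    (ha : ∀ i : Fin n, ∀ hi : (i : ℕ) + 1 < n,
        f (σ i) (t i) = 1 ∧ f (σ i) (t ⟨(i : ℕ) + 1, hi⟩) = 0)
    (hb : ∀ i : Fin n, ∀ hi : (i : ℕ) + 1 < n, ∀ j : Fin n,
        j ≠ i → j ≠ ⟨(i : ℕ) + 1, hi⟩ →
        ∀ x ∈ Set.Icc (t i) (t ⟨(i : ℕ) + 1, hi⟩), f (σ j) x = 0)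
    (hc : ∀ i : Fin n, ∀ hi : (i : ℕ) + 1 < n,
        ∀ x ∈ Set.Icc (t i) (t ⟨(i : ℕ) + 1, hi⟩),
        f (σ ⟨(i : ℕ) + 1, hi⟩) x = 1 - f (σ i) x)
    (hd : ∀ i : Fin n, ∀ hi : (i : ℕ) + 1 < n,
        Set.BijOn (f (σ i)) (Set.Icc (t i) (t ⟨(i : ℕ) + 1, hi⟩)) (Set.Icc 0 1) ∧
        Set.BijOn (f (σ ⟨(i : ℕ) + 1, hi⟩))
          (Set.Icc (t i) (t ⟨(i : ℕ) + 1, hi⟩)) (Set.Icc 0 1)) :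
    Set.InjOn (fun x => (WithLp.toLp 2 (fun i => f i x) : EuclideanSpace ℝ (Fin n))) (Set.Icc 0 1) := by
  -- covering lemma: every point of [0,1] lies in some [t_k, t_{k+1}]
  have cover : ∀ z ∈ Set.Icc (0:ℝ) 1, ∃ k : ℕ, ∃ hk : k + 1 < n,
      t ⟨k, by omega⟩ ≤ z ∧ z ≤ t ⟨k + 1, hk⟩ := by
    intro z hz
    have step : ∀ m : ℕ, ∀ hm : m < n, z ≤ t ⟨m, hm⟩ → ∃ k : ℕ, ∃ hk : k + 1 < n,
        t ⟨k, by omega⟩ ≤ z ∧ z ≤ t ⟨k + 1, hk⟩ := by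
      intro m
      induction m with
      | zero =>
        intro hm hzm
        refine ⟨0, by omega, ?_, ?_⟩
        · rw [ht0]; exact hz.1
        · have hz0 : z = 0 := le_antisymm (ht0 ▸ hzm) hz.1
          have : t ⟨0, by omega⟩ ≤ t ⟨1, by omega⟩ :=
            hmono.monotone (by simp [Fin.le_def])
          rw [hz0, ← ht0]; exact this
      | succ m ih =>
        intro hm hzm
        by_cases hle : t ⟨m, by omega⟩ ≤ z
        · exact ⟨m, hm, hle, hzm⟩
        · exact ih (by omega) (le_of_lt (lt_of_not_ge hle))
    have hlt : n - 1 < n := by omega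
    exact step (n - 1) hlt (by rw [ht1]; exact hz.2)
  -- main lemma: two distinct points cannot have all equal values
  have key : ∀ a b : ℝ, a ∈ Set.Icc (0:ℝ) 1 → b ∈ Set.Icc (0:ℝ) 1 → a < b →
      (∀ i, f i a = f i b) → False := by
    intro a b ha' hb' hab heq
    obtain ⟨i, hi, hia1, hia2⟩ := cover a ha'
    obtain ⟨j, hj, hjb1, hjb2⟩ := cover b hb'
    have hij : i ≤ j := by
      by_contra hcon
      push_neg at hcon
      have : t ⟨j + 1, hj⟩ ≤ t ⟨i, by omega⟩ :=
        hmono.monotone (by simp [Fin.le_def]; omega)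
      linarith
    rcases eq_or_lt_of_le hij with rfl | hij
    · -- same interval: injectivity
      have hinj := (hd ⟨i, by omega⟩ hi).1.injOn
      have := hinj (Set.mem_Icc.mpr ⟨hia1, hia2⟩) (Set.mem_Icc.mpr ⟨hjb1, hjb2⟩)
        (heq (σ ⟨i, by omega⟩))
      linarith
    · -- i < j
      have hne1 : (⟨i, by omega⟩ : Fin n) ≠ ⟨j, by omega⟩ := by
        simp [Fin.ext_iff]; omega
      have hne2 : (⟨i, by omega⟩ : Fin n) ≠ ⟨j + 1, hj⟩ := by
        simp [Fin.ext_iff]; omega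
      have h0b : f (σ ⟨i, by omega⟩) b = 0 :=
        hb ⟨j, by omega⟩ hj ⟨i, by omega⟩ hne1 hne2 b (Set.mem_Icc.mpr ⟨hjb1, hjb2⟩)
      have h0a : f (σ ⟨i, by omega⟩) a = 0 := (heq _).trans h0b
      have hEnd : f (σ ⟨i, by omega⟩) (t ⟨i + 1, hi⟩) = 0 := (ha ⟨i, by omega⟩ hi).2
      have hmem2 : t ⟨i + 1, hi⟩ ∈ Set.Icc (t ⟨i, by omega⟩) (t ⟨i + 1, hi⟩) :=
        Set.mem_Icc.mpr ⟨hmono.monotone (by simp [Fin.le_def]), le_refl _⟩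
      have hxend : a = t ⟨i + 1, hi⟩ :=
        (hd ⟨i, by omega⟩ hi).1.injOn (Set.mem_Icc.mpr ⟨hia1, hia2⟩) hmem2
          (h0a.trans hEnd.symm)
      have h1a : f (σ ⟨i + 1, hi⟩) a = 1 := by
        rw [hc ⟨i, by omega⟩ hi a (Set.mem_Icc.mpr ⟨hia1, hia2⟩), h0a]; ring
      rcases eq_or_lt_of_le (show i + 1 ≤ j by omega) with hij2 | hij2
      · -- j = i + 1 : a = t_j, use injectivity of f (σ j) on [t_j, t_{j+1}]
        have hamem : a ∈ Set.Icc (t ⟨j, by omega⟩) (t ⟨j + 1, hj⟩) := by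
          have ej : (⟨j, by omega⟩ : Fin n) = ⟨i + 1, hi⟩ := Fin.ext (by simp; omega)
          rw [ej, hxend]
          exact Set.mem_Icc.mpr ⟨le_refl _, hmono.monotone (by simp [Fin.le_def]; omega)⟩
        have hinj := (hd ⟨j, by omega⟩ hj).1.injOn
        have := hinj hamem (Set.mem_Icc.mpr ⟨hjb1, hjb2⟩) (heq (σ ⟨j, by omega⟩))
        linarith
      · -- i + 1 < j : f (σ (i+1)) vanishes on [t_j, t_{j+1}]
        have hne1' : (⟨i + 1, hi⟩ : Fin n) ≠ ⟨j, by omega⟩ := by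
          simp [Fin.ext_iff]; omega
        have hne2' : (⟨i + 1, hi⟩ : Fin n) ≠ ⟨j + 1, hj⟩ := by
          simp [Fin.ext_iff]; omega
        have h0b' : f (σ ⟨i + 1, hi⟩) b = 0 :=
          hb ⟨j, by omega⟩ hj ⟨i + 1, hi⟩ hne1' hne2' b (Set.mem_Icc.mpr ⟨hjb1, hjb2⟩)
        have := (heq (σ ⟨i + 1, hi⟩)).symm.trans h1a
        rw [h0b'] at this
        linarith
  intro x hx y hy hxy
  have hfeq : ∀ i, f i x = f i y := fun i => by
    simpa using congrArg (fun v : EuclideanSpace ℝ (Fin n) => v i) hxy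
  rcases lt_trichotomy x y with h | h | h
  · exact (key x y hx hy h hfeq).elim
  · exact h
  · exact (key y x hy hx h (fun i => (hfeq i).symm)).elim
end

section
/- If T_P : [0,1] → [0,1]^n is injective and its range equals a Hamiltonian path ⋃_{i=1}^{n−1} conv{e_{π(i)}, e_{π(i+1)}}, then each f_i is strongly normal: there exists a unique x ∈ [0,1] with f_i(x) = 1. -/
theorem aux_seg {n : ℕ} {i a b : Fin n} (hab : a ≠ b)
    {p : EuclideanSpace ℝ (Fin n)}
    (hp : p ∈ segment ℝ (EuclideanSpace.single a 1) (EuclideanSpace.single b 1))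
    (hpi : p i = 1) : p = EuclideanSpace.single i 1 := by
  obtain ⟨t, s, ht, hs, hts, rfl⟩ := hp
  by_cases hia : i = a
  · subst hia
    have hib : i ≠ b := hab
    have ht1 : t = 1 := by
      simpa [PiLp.add_apply, PiLp.smul_apply, EuclideanSpace.single_apply, hib] using hpi
    have hs0 : s = 0 := by linarith
    simp [ht1, hs0]
  · by_cases hib : i = b
    · subst hib
      have hs1 : s = 1 := by
        simpa [PiLp.add_apply, PiLp.smul_apply, EuclideanSpace.single_apply, hia] using hpi
      have ht0 : t = 0 := by linarith
      simp [hs1, ht0]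
    · exfalso
      have : (0:ℝ) = 1 := by
        simpa [PiLp.add_apply, PiLp.smul_apply, EuclideanSpace.single_apply, hia, hib] using hpi
      norm_num at this

theorem stmt7 (n : ℕ) (hn : 2 ≤ n) (f : Fin n → ℝ → ℝ)
    (hcont : ∀ i, ContinuousOn (f i) (Set.Icc 0 1))
    (hmap : ∀ i, Set.MapsTo (f i) (Set.Icc 0 1) (Set.Icc 0 1))
    (hinj : Set.InjOn (fun x => (WithLp.toLp 2 (fun i => f i x) : EuclideanSpace ℝ (Fin n)))
      (Set.Icc 0 1))
    (π : Equiv.Perm (Fin n))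
    (hrange : (fun x => (WithLp.toLp 2 (fun i => f i x) : EuclideanSpace ℝ (Fin n))) '' (Set.Icc 0 1) =
      ⋃ i : Fin n, ⋃ hi : (i : ℕ) + 1 < n,
        segment ℝ (EuclideanSpace.single (π i) 1)
          (EuclideanSpace.single (π ⟨(i : ℕ) + 1, hi⟩) 1)) :
    ∀ i : Fin n, ∃! x, x ∈ Set.Icc (0:ℝ) 1 ∧ f i x = 1 := by
  intro i
  have hvert : EuclideanSpace.single i (1:ℝ) ∈ ⋃ j : Fin n, ⋃ hj : (j : ℕ) + 1 < n,
      segment ℝ (EuclideanSpace.single (π j) (1:ℝ))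
        (EuclideanSpace.single (π ⟨(j : ℕ) + 1, hj⟩) (1:ℝ)) := by
    by_cases h : ((π.symm i : Fin n) : ℕ) + 1 < n
    · refine Set.mem_iUnion.2 ⟨π.symm i, Set.mem_iUnion.2 ⟨h, ?_⟩⟩
      rw [Equiv.apply_symm_apply]
      exact left_mem_segment ℝ _ _
    · have hk : ((π.symm i : Fin n) : ℕ) = n - 1 := by
        have := (π.symm i).isLt; omega
      refine Set.mem_iUnion.2 ⟨⟨n - 2, by omega⟩, Set.mem_iUnion.2 ⟨show n - 2 + 1 < n by omega, ?_⟩⟩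
      have he : (⟨n - 2 + 1, by omega⟩ : Fin n) = π.symm i := by
        apply Fin.ext; simp [hk]; omega
      rw [he, Equiv.apply_symm_apply]
      exact right_mem_segment ℝ _ _
  rw [← hrange] at hvert
  obtain ⟨x, hx, hfx⟩ := hvert
  have hfx1 : f i x = 1 := by
    have := congrArg (fun v : EuclideanSpace ℝ (Fin n) => v i) hfx
    simpa [EuclideanSpace.single_apply] using this
  have key : ∀ y ∈ Set.Icc (0:ℝ) 1, f i y = 1 →
      (WithLp.toLp 2 (fun j => f j y) : EuclideanSpace ℝ (Fin n)) = EuclideanSpace.single i 1 := by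
    intro y hy hfy
    have hmem : (WithLp.toLp 2 (fun j => f j y) : EuclideanSpace ℝ (Fin n)) ∈
        ⋃ j : Fin n, ⋃ hj : (j : ℕ) + 1 < n,
          segment ℝ (EuclideanSpace.single (π j) (1:ℝ))
            (EuclideanSpace.single (π ⟨(j : ℕ) + 1, hj⟩) (1:ℝ)) := by
      rw [← hrange]; exact ⟨y, hy, rfl⟩
    obtain ⟨j, hj⟩ := Set.mem_iUnion.1 hmem
    obtain ⟨hjn, hseg⟩ := Set.mem_iUnion.1 hj
    have hab : π j ≠ π ⟨(j : ℕ) + 1, hjn⟩ := by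
      intro h
      have := π.injective h
      have := congrArg Fin.val this
      simp at this
    exact aux_seg hab hseg hfy
  refine ⟨x, ⟨hx, hfx1⟩, ?_⟩
  rintro y ⟨hy, hfy⟩
  exact hinj hy hx ((key y hy hfy).trans hfx.symm)
end

section
/- The set of points (x_1,…,x_n) ∈ [0,1]^n satisfying: (i) min{x_i, x_j} = 0 for all |i−j| > 1, and (ii) x_i + x_{i+1} ≤ 1 for all i = 1,…,n−1, equals ⋃_{i=1}^{n−1} conv{0, e_i, e_{i+1}}. -/
open Set

lemma tri14 {n : ℕ} (p q : Fin n → ℝ) :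
    convexHull ℝ {(0 : Fin n → ℝ), p, q} =
      {x | ∃ a b : ℝ, 0 ≤ a ∧ 0 ≤ b ∧ a + b ≤ 1 ∧ x = a • p + b • q} := by
  ext x
  rw [convexHull_insert (by simp : ({p, q} : Set (Fin n → ℝ)).Nonempty), convexHull_pair,
    mem_convexJoin]
  simp only [mem_singleton_iff, exists_eq_left, mem_setOf_eq]
  constructor
  · rintro ⟨z, hz, hx⟩
    obtain ⟨u, v, hu, hv, huv, rfl⟩ := hz
    obtain ⟨s, t, hs, ht, hst, rfl⟩ := hx
    refine ⟨t*u, t*v, by positivity, by positivity, by nlinarith, ?_⟩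
    simp [smul_add, smul_smul]
  · rintro ⟨a, b, ha, hb, hab, rfl⟩
    by_cases h : a + b = 0
    · have ha0 : a = 0 := by linarith
      have hb0 : b = 0 := by linarith
      refine ⟨p, ⟨1, 0, by norm_num, by norm_num, by norm_num, by simp⟩,
        ⟨1, 0, by norm_num, by norm_num, by norm_num, by simp [ha0, hb0]⟩⟩
    · have ht : 0 < a + b := lt_of_le_of_ne (by linarith) (Ne.symm h)
      refine ⟨(a/(a+b)) • p + (b/(a+b)) • q,
        ⟨a/(a+b), b/(a+b), by positivity, by positivity, by field_simp, rfl⟩,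
        ⟨1-(a+b), a+b, by linarith, by linarith, by ring, ?_⟩⟩
      rw [smul_add, smul_smul, smul_smul, smul_zero, zero_add]
      field_simp

/-- The set of points of `[0,1]^n` satisfying `min{x_i, x_j} = 0` for all
`|i−j| > 1` and `x_i + x_{i+1} ≤ 1` for all `i` equals
`⋃_{i=1}^{n−1} conv{0, e_i, e_{i+1}}`. -/
theorem stmt14 (n : ℕ) (hn : 2 ≤ n) :
    {x : Fin n → ℝ | (∀ k, x k ∈ Set.Icc (0:ℝ) 1) ∧
        (∀ i j : Fin n, ((i : ℕ) + 1 < j ∨ (j : ℕ) + 1 < i) →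
          min (x i) (x j) = 0) ∧
        ∀ i : Fin n, ∀ hi : (i : ℕ) + 1 < n,
          x i + x ⟨(i : ℕ) + 1, hi⟩ ≤ 1} =
      ⋃ i : Fin n, ⋃ hi : (i : ℕ) + 1 < n,
        convexHull ℝ {(0 : Fin n → ℝ), Pi.single i 1,
          Pi.single (⟨(i : ℕ) + 1, hi⟩ : Fin n) 1} := by
  ext x
  simp only [Set.mem_iUnion, Set.mem_setOf_eq]
  constructor
  · rintro ⟨hIcc, hmin, hsum⟩
    have hz : ∀ a b : Fin n, ((a : ℕ) + 1 < b ∨ (b : ℕ) + 1 < a) → x a ≠ 0 → x b = 0 := by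
      intro a b hab hna
      have hm := hmin a b hab
      rcases min_cases (x a) (x b) with ⟨h1, h2⟩ | ⟨h1, h2⟩
      · exact absurd (h1 ▸ hm) hna
      · exact h1 ▸ hm
    -- find a window [m, m+1] containing the support
    obtain ⟨m, hm, hzero⟩ :
        ∃ m, ∃ _ : m + 1 < n, ∀ k : Fin n, (k : ℕ) ≠ m → (k : ℕ) ≠ m + 1 → x k = 0 := by
      by_cases h0 : ∀ k, x k = 0
      · exact ⟨0, by omega, fun k _ _ => h0 k⟩
      · push_neg at h0
        obtain ⟨j, hj⟩ := h0
        by_cases hjn : (j : ℕ) + 1 < n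
        · by_cases hj1 : x ⟨(j : ℕ) + 1, hjn⟩ = 0
          · by_cases hj0 : (j : ℕ) = 0
            · refine ⟨(j : ℕ), hjn, fun k hk1 hk2 => ?_⟩
              exact hz j k (Or.inl (by omega)) hj
            · by_cases hjm : x ⟨(j : ℕ) - 1, by omega⟩ = 0
              · refine ⟨(j : ℕ), hjn, fun k hk1 hk2 => ?_⟩
                rcases lt_trichotomy ((k : ℕ) + 1) (j : ℕ) with h | h | h
                · exact hz j k (Or.inr h) hj
                · have : k = ⟨(j : ℕ) - 1, by omega⟩ := Fin.ext (by simp; omega)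
                  rw [this]; exact hjm
                · exact hz j k (Or.inl (by omega)) hj
              · refine ⟨(j : ℕ) - 1, by omega, fun k hk1 hk2 => ?_⟩
                rcases lt_trichotomy ((k : ℕ) + 1) (j : ℕ) with h | h | h
                · exact hz j k (Or.inr h) hj
                · exact absurd (by omega : (k : ℕ) = (j : ℕ) - 1) hk1
                · rcases eq_or_lt_of_le (by omega : (j : ℕ) ≤ (k : ℕ)) with h' | h'
                  · exact absurd (by omega : (k : ℕ) = (j : ℕ) - 1 + 1) hk2
                  · rcases eq_or_lt_of_le (by omega : (j : ℕ) + 1 ≤ (k : ℕ)) with h'' | h''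
                    · have : k = ⟨(j : ℕ) + 1, hjn⟩ := Fin.ext (by simp; omega)
                      rw [this]; exact hj1
                    · exact hz j k (Or.inl h'') hj
          · refine ⟨(j : ℕ), hjn, fun k hk1 hk2 => ?_⟩
            rcases lt_trichotomy ((k : ℕ)) (j : ℕ) with h | h | h
            · exact hz ⟨(j : ℕ) + 1, hjn⟩ k (Or.inr (by simp; omega)) hj1
            · exact absurd (by omega : (k : ℕ) = (j : ℕ)) hk1
            · exact hz j k (Or.inl (by omega)) hj
        · -- j is the last index
          have hje : (j : ℕ) + 1 = n := by have := j.isLt; omega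
          refine ⟨(j : ℕ) - 1, by omega, fun k hk1 hk2 => ?_⟩
          have hkj : (k : ℕ) + 1 < (j : ℕ) := by have := k.isLt; omega
          exact hz j k (Or.inr hkj) hj
    refine ⟨⟨m, by omega⟩, hm, ?_⟩
    rw [tri14]
    have hne : (⟨m, by omega⟩ : Fin n) ≠ ⟨m + 1, hm⟩ := Fin.ne_of_val_ne (by simp)
    refine ⟨x ⟨m, by omega⟩, x ⟨m + 1, hm⟩, (hIcc _).1, (hIcc _).1, hsum ⟨m, by omega⟩ hm, ?_⟩
    funext k
    simp only [Pi.add_apply, Pi.smul_apply, Pi.single_apply, smul_eq_mul]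
    by_cases h1 : k = (⟨m, by omega⟩ : Fin n)
    · rw [if_pos h1, if_neg (h1 ▸ hne)]
      rw [h1]; ring
    · by_cases h2 : k = (⟨m + 1, hm⟩ : Fin n)
      · rw [if_neg h1, if_pos h2, h2]; ring
      · rw [if_neg h1, if_neg h2]
        rw [hzero k (fun h => h1 (Fin.ext h)) (fun h => h2 (Fin.ext h))]; ring
  · rintro ⟨i, hi, hx⟩
    rw [tri14] at hx
    obtain ⟨a, b, ha, hb, hab, rfl⟩ := hx
    set i' : Fin n := ⟨(i : ℕ) + 1, hi⟩ with hi'def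
    have hne : i ≠ i' := Fin.ne_of_val_ne (by simp [hi'def])
    have hxk : ∀ k : Fin n, (a • (Pi.single i 1 : Fin n → ℝ) + b • (Pi.single i' 1 : Fin n → ℝ)) k =
        if k = i then a else if k = i' then b else 0 := by
      intro k
      simp only [Pi.add_apply, Pi.smul_apply, Pi.single_apply, smul_eq_mul]
      by_cases h1 : k = i
      · rw [if_pos h1, if_pos h1, if_neg (h1 ▸ hne)]; ring
      · by_cases h2 : k = i'
        · rw [if_neg h1, if_neg h1, if_pos h2, if_pos h2]; ring
        · rw [if_neg h1, if_neg h1, if_neg h2, if_neg h2]; ring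
    have hnonneg : ∀ k, 0 ≤ (a • (Pi.single i 1 : Fin n → ℝ) + b • (Pi.single i' 1 : Fin n → ℝ)) k := by
      intro k; rw [hxk]; split_ifs <;> linarith
    refine ⟨?_, ?_, ?_⟩
    · intro k; refine ⟨hnonneg k, ?_⟩
      rw [hxk]; split_ifs <;> linarith
    · intro i0 j0 h
      have hor : (a • (Pi.single i 1 : Fin n → ℝ) + b • (Pi.single i' 1 : Fin n → ℝ)) i0 = 0 ∨
          (a • (Pi.single i 1 : Fin n → ℝ) + b • (Pi.single i' 1 : Fin n → ℝ)) j0 = 0 := by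
        by_cases hc : (i0 : ℕ) = (i : ℕ) ∨ (i0 : ℕ) = (i : ℕ) + 1
        · right
          rw [hxk, if_neg (fun hh => by
              have := congrArg Fin.val hh; omega),
            if_neg (fun hh => by
              have := congrArg Fin.val hh; simp [hi'def] at this; omega)]
        · left
          push_neg at hc
          rw [hxk, if_neg (fun hh => by
              have := congrArg Fin.val hh; omega),
            if_neg (fun hh => by
              have := congrArg Fin.val hh; simp [hi'def] at this; omega)]
      rcases hor with h' | h'
      · rw [h', min_eq_left (hnonneg j0)]
      · rw [h', min_eq_right (hnonneg i0)]
    · intro k hk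
      set k' : Fin n := ⟨(k : ℕ) + 1, hk⟩ with hk'def
      rw [hxk, hxk]
      by_cases h1 : k = i
      · have hv : (k : ℕ) = (i : ℕ) := congrArg Fin.val h1
        have h2 : k' = i' := Fin.ext (by simp [hk'def, hi'def, hv])
        rw [if_pos h1, if_neg (fun hh => by
            have := congrArg Fin.val hh; simp [hk'def] at this; omega), if_pos h2]
        exact hab
      · by_cases h2 : k = i'
        · have hv : (k : ℕ) = (i : ℕ) + 1 := congrArg Fin.val h2
          rw [if_neg h1, if_pos h2, if_neg (fun hh => by
              have := congrArg Fin.val hh; simp [hk'def] at this; omega),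
            if_neg (fun hh => by
              have := congrArg Fin.val hh; simp [hk'def, hi'def] at this; omega)]
          linarith
        · rw [if_neg h1, if_neg h2]
          split_ifs <;> linarith
end

section
/- The set of points (x_1,…,x_n) ∈ [0,1]^n satisfying: (i) min{x_i, x_j} = 0 for all |i−j| > 1, (ii) x_i + x_{i+1} ≤ 1 for all i = 1,…,n−1, and (iii) x_1 + ⋯ + x_n ≥ 1, equals the Hamiltonian path ⋃_{i=1}^{n−1} conv{e_i, e_{i+1}} in the 1-skeleton of the fundamental simplex Δ_n. -/
/-- Lemma 3 (1-set of 𝔸): the set of points of `[0,1]^n` satisfying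
`min{x_i, x_j} = 0` for `|i−j| > 1`, `x_i + x_{i+1} ≤ 1` for all `i`, and
`x_1 + ⋯ + x_n ≥ 1`, equals the Hamiltonian path
`⋃_{i=1}^{n−1} conv{e_i, e_{i+1}}`. -/
theorem stmt15 (n : ℕ) (hn : 2 ≤ n) :
    {x : Fin n → ℝ | (∀ k, x k ∈ Set.Icc (0:ℝ) 1) ∧
        (∀ i j : Fin n, ((i : ℕ) + 1 < j ∨ (j : ℕ) + 1 < i) →
          min (x i) (x j) = 0) ∧
        (∀ i : Fin n, ∀ hi : (i : ℕ) + 1 < n,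
          x i + x ⟨(i : ℕ) + 1, hi⟩ ≤ 1) ∧
        1 ≤ ∑ i : Fin n, x i} =
      ⋃ i : Fin n, ⋃ hi : (i : ℕ) + 1 < n,
        segment ℝ (Pi.single i 1) (Pi.single (⟨(i : ℕ) + 1, hi⟩ : Fin n) 1) := by
  ext x
  simp only [Set.mem_setOf_eq, Set.mem_iUnion]
  constructor
  · rintro ⟨hIcc, hmin, hadj, hsum⟩
    have hS : (Finset.univ.filter (fun k => x k ≠ 0)).Nonempty := by
      by_contra h
      rw [Finset.not_nonempty_iff_eq_empty, Finset.filter_eq_empty_iff] at h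
      simp only [ne_eq, not_not] at h
      have : ∑ i : Fin n, x i = 0 := Finset.sum_eq_zero (fun k _ => h (Finset.mem_univ k))
      linarith
    set i := (Finset.univ.filter fun k => x k ≠ 0).min' hS with hidef
    have hiS : x i ≠ 0 := by
      have := (Finset.univ.filter fun k => x k ≠ 0).min'_mem hS
      simpa using this
    have hipos : 0 < x i := lt_of_le_of_ne (hIcc i).1 (Ne.symm hiS)
    have hmin' : ∀ k, x k ≠ 0 → i ≤ k := by
      intro k hk
      exact Finset.min'_le _ k (by simpa using hk)
    have hsupp : ∀ k : Fin n, k ≠ i → (k : ℕ) ≠ (i : ℕ) + 1 → x k = 0 := by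
      intro k hk1 hk2
      by_contra hk
      have hik : i ≤ k := hmin' k hk
      have hlt : (i : ℕ) + 1 < (k : ℕ) := by
        have : (i : ℕ) ≤ (k : ℕ) := hik
        have hne : (i : ℕ) ≠ (k : ℕ) := fun h => hk1 (Fin.ext h.symm)
        omega
      have hm := hmin i k (Or.inl hlt)
      have hkpos : 0 < x k := lt_of_le_of_ne (hIcc k).1 (Ne.symm hk)
      rcases min_eq_iff.mp hm with ⟨h0, _⟩ | ⟨h0, _⟩ <;> linarith
    by_cases hi : (i : ℕ) + 1 < n
    · refine ⟨i, hi, ?_⟩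
      obtain ⟨j, hjdef⟩ : ∃ j : Fin n, j = ⟨(i : ℕ) + 1, hi⟩ := ⟨_, rfl⟩
      rw [← hjdef]
      have hji : (j : ℕ) = (i : ℕ) + 1 := by rw [hjdef]
      have hij : i ≠ j := by
        intro h
        rw [h] at hji
        omega
      have hsum2 : ∑ k : Fin n, x k = x i + x j := by
        rw [← Finset.sum_pair hij]
        exact (Finset.sum_subset (Finset.subset_univ _) (fun k _ hk => by
          simp only [Finset.mem_insert, Finset.mem_singleton, not_or] at hk
          exact hsupp k hk.1 (fun h => hk.2 (Fin.ext (h.trans hji.symm))))).symm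
      have hone : x i + x j = 1 := by
        have h1 := hadj i hi
        rw [← hjdef] at h1
        exact le_antisymm h1 (by rw [← hsum2]; exact hsum)
      refine ⟨x i, x j, (hIcc i).1, (hIcc j).1, hone, ?_⟩
      funext k
      simp only [Pi.add_apply, Pi.smul_apply, Pi.single_apply, smul_eq_mul]
      by_cases hki : k = i
      · subst hki
        rw [if_pos rfl, if_neg hij]
        ring
      · by_cases hkj : k = j
        · subst hkj
          rw [if_neg (Ne.symm hij), if_pos rfl]
          ring
        · rw [if_neg hki, if_neg hkj,
            hsupp k hki (fun h => hkj (Fin.ext (h.trans hji.symm)))]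
          ring
    · -- i is the last index: x = e_i, an endpoint of the last segment
      have hin : (i : ℕ) + 1 = n := by
        have := i.isLt
        omega
      have hsupp' : ∀ k : Fin n, k ≠ i → x k = 0 := by
        intro k hk
        exact hsupp k hk (fun h => by have := k.isLt; omega)
      have hsum2 : ∑ k : Fin n, x k = x i := by
        rw [← Finset.sum_singleton (f := x) i]
        exact (Finset.sum_subset (Finset.subset_univ _) (fun k _ hk => by
          simp only [Finset.mem_singleton] at hk
          exact hsupp' k hk)).symm
      have hxi : x i = 1 := le_antisymm (hIcc i).2 (by rw [← hsum2]; exact hsum)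
      have hi' : (n - 2 : ℕ) + 1 < n := by omega
      refine ⟨⟨n - 2, by omega⟩, hi', ?_⟩
      have hx : x = Pi.single (⟨(n - 2 : ℕ) + 1, hi'⟩ : Fin n) 1 := by
        funext k
        have hkeq : (⟨(n - 2 : ℕ) + 1, hi'⟩ : Fin n) = i := Fin.ext (by
          simp only [Fin.val_mk]; omega)
        rw [hkeq]
        by_cases hki : k = i
        · subst hki; rw [Pi.single_eq_same]; exact hxi
        · rw [Pi.single_eq_of_ne hki]; exact hsupp' k hki
      exact Set.mem_of_eq_of_mem hx (right_mem_segment ℝ _ _)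
  · rintro ⟨i, hi, hxmem⟩
    obtain ⟨j, hjdef⟩ : ∃ j : Fin n, j = ⟨(i : ℕ) + 1, hi⟩ := ⟨_, rfl⟩
    rw [← hjdef] at hxmem
    obtain ⟨a, b, ha, hb, hab, hx⟩ := hxmem
    have hji : (j : ℕ) = (i : ℕ) + 1 := by rw [hjdef]
    have hij : i ≠ j := by
      intro h
      rw [h] at hji
      omega
    have hxk : ∀ k : Fin n, x k = (if k = i then a else 0) + (if k = j then b else 0) := by
      intro k
      rw [← hx]
      simp only [Pi.add_apply, Pi.smul_apply, Pi.single_apply, smul_eq_mul]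
      by_cases h1 : k = i <;> by_cases h2 : k = j <;> simp [h1, h2]
    have hnonneg : ∀ k, 0 ≤ x k := by
      intro k
      rw [hxk k]
      positivity
    have hsum : ∑ k : Fin n, x k = 1 := by
      have h2 : ∑ k : Fin n, x k = x i + x j := by
        rw [← Finset.sum_pair hij]
        exact (Finset.sum_subset (Finset.subset_univ _) (fun k _ hk => by
          simp only [Finset.mem_insert, Finset.mem_singleton, not_or] at hk
          rw [hxk k, if_neg hk.1, if_neg hk.2]; ring)).symm
      rw [h2, hxk i, hxk j, if_pos rfl, if_neg hij, if_neg (Ne.symm hij), if_pos rfl]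
      linarith
    have hpair : ∀ p q : Fin n, p ≠ q → x p + x q ≤ 1 := by
      intro p q hpq
      rw [← hsum, ← Finset.sum_pair hpq]
      exact Finset.sum_le_sum_of_subset_of_nonneg (Finset.subset_univ _)
        (fun k _ _ => hnonneg k)
    refine ⟨fun k => ⟨hnonneg k, ?_⟩, ?_, ?_, le_of_eq hsum.symm⟩
    · calc x k ≤ x k + ∑ l ∈ Finset.univ.erase k, x l := by
            have : 0 ≤ ∑ l ∈ Finset.univ.erase k, x l :=
              Finset.sum_nonneg (fun l _ => hnonneg l)
            linarith
        _ = ∑ l : Fin n, x l := Finset.add_sum_erase _ _ (Finset.mem_univ k)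
        _ = 1 := hsum
    · intro p q hpq
      have hor : x p = 0 ∨ x q = 0 := by
        by_contra h
        push_neg at h
        have hp : p = i ∨ p = j := by
          by_contra hp
          push_neg at hp
          have := hxk p
          rw [if_neg hp.1, if_neg hp.2] at this
          exact h.1 (by linarith)
        have hq : q = i ∨ q = j := by
          by_contra hq
          push_neg at hq
          have := hxk q
          rw [if_neg hq.1, if_neg hq.2] at this
          exact h.2 (by linarith)
        rcases hp with rfl | rfl <;> rcases hq with h' | h' <;> subst h' <;>
          rcases hpq with h'' | h'' <;> omega
      rcases hor with h | h
      · rw [h]; exact min_eq_left (hnonneg q)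
      · rw [h]; exact min_eq_right (hnonneg p)
    · intro p hp
      refine hpair p ⟨(p : ℕ) + 1, hp⟩ (fun h => ?_)
      have : (p : ℕ) = (p : ℕ) + 1 := congrArg Fin.val h
      omega
end
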